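/- There exists a constant C > 0 such that for all integers j ≥ 1, all l ∈ ℕ₀, all k ∈ ℤ and every x ∈ ℝ lying outside the support of ψ_{j+l,k} ∘ ρ₁ one has ∫_{-1}^{1} | Δ²_{h·2^{-j}} (ψ_{j+l,k} ∘ ρ₁)(x) | dh ≤ C · 2^{-l}. -/

import Mathlib

open MeasureTheory

/-- The second order cardinal B-spline `N₂`. -/
noncomputable def N2 (x : ℝ) : ℝ :=
  if 0 ≤ x ∧ x < 1 then x else if 1 ≤ x ∧ x < 2 then 2 - x else 0

/-- The second order Chui–Wang mother wavelet `ψ`. -/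
noncomputable def cwPsi (x : ℝ) : ℝ :=
  if 0 ≤ x ∧ x < 1 / 2 then x / 6
  else if 1 / 2 ≤ x ∧ x < 1 then -7 * x / 6 + 2 / 3
  else if 1 ≤ x ∧ x < 3 / 2 then 8 * x / 3 - 19 / 6
  else if 3 / 2 ≤ x ∧ x < 2 then -8 * x / 3 + 29 / 6
  else if 2 ≤ x ∧ x < 5 / 2 then 7 * x / 6 - 17 / 6
  else if 5 / 2 ≤ x ∧ x < 3 then -x / 6 + 1 / 2
  else 0

/-- The Chui–Wang wavelet system: `ψ_{j,k}(x) = ψ(2^j x - k)` for `j ≥ 0`,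
`ψ_{-1,k}(x) = N₂(x - k)`, and `ψ_{j,k} = 0` for `j < -1`. -/
noncomputable def cw (j k : ℤ) (x : ℝ) : ℝ :=
  if 0 ≤ j then cwPsi ((2 : ℝ) ^ j * x - (k : ℝ))
  else if j = -1 then N2 (x - (k : ℝ))
  else 0

/-- The 2-periodic reflection `ρ₁(x) = min(x mod 2, (-x) mod 2)`. -/
noncomputable def rho1 (x : ℝ) : ℝ :=
  min (2 * Int.fract (x / 2)) (2 * Int.fract (-x / 2))

/-- Second-order forward difference `Δ²_s g(x) = g(x+2s) - 2g(x+s) + g(x)`. -/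
def diff2 (s : ℝ) (g : ℝ → ℝ) (x : ℝ) : ℝ :=
  g (x + 2 * s) - 2 * g (x + s) + g x



lemma cwPsi_meas : Measurable cwPsi := by
  unfold cwPsi
  repeat'
    refine Measurable.ite ?_ ?_ ?_
  all_goals first
    | exact measurableSet_Ico
    | fun_prop

lemma rho1_meas : Measurable rho1 := by
  unfold rho1
  exact (measurable_const.mul (measurable_fract.comp (measurable_id.div_const 2))).min
    (measurable_const.mul (measurable_fract.comp (measurable_neg.div_const 2)))

lemma cwPsi_abs_le_one (u : ℝ) : |cwPsi u| ≤ 1 := by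
  unfold cwPsi
  split_ifs with h1 h2 h3 h4 h5 h6 <;>
    [skip; skip; skip; skip; skip; skip; simp] <;>
    (obtain ⟨ha, hb⟩ := ‹_ ∧ _›; rw [abs_le]; constructor <;> linarith)

lemma cwPsi_abs_le_bnd (u : ℝ) :
    |cwPsi u| ≤ (if 0 ≤ u ∧ u ≤ 3 then (1:ℝ) else 0) := by
  by_cases h : 0 ≤ u ∧ u ≤ 3
  · simpa [h] using cwPsi_abs_le_one u
  · push_neg at h
    have hz : cwPsi u = 0 := by
      unfold cwPsi
      split_ifs with h1 h2 h3 h4 h5 h6 <;> first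
        | rfl
        | (obtain ⟨ha, hb⟩ := ‹_ ∧ _›; exfalso; have h3 := h (by linarith); linarith)
    rw [hz, abs_zero]
    positivity

lemma rho1_periodic : Function.Periodic rho1 2 := by
  intro x
  unfold rho1
  have h1 : (x + 2) / 2 = x / 2 + 1 := by ring
  have h2 : -(x + 2) / 2 = -x / 2 + (-1 : ℤ) := by push_cast; ring
  rw [h1, h2, Int.fract_add_intCast, Int.fract_add_one]

lemma rho1_eq_on_01 {t : ℝ} (h0 : 0 ≤ t) (h1 : t ≤ 1) : rho1 t = t := by
  unfold rho1
  rcases eq_or_lt_of_le h0 with h | h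
  · subst h; norm_num
  · have ha : Int.fract (t / 2) = t / 2 := Int.fract_eq_self.mpr ⟨by linarith, by linarith⟩
    have hb : Int.fract (-t / 2) = 1 - t / 2 := by
      have : -t / 2 = (1 - t / 2) + (-1 : ℤ) := by push_cast; ring
      rw [this, Int.fract_add_intCast, Int.fract_eq_self.mpr ⟨by linarith, by linarith⟩]
    rw [ha, hb]
    rw [min_eq_left (by linarith)]
    ring

lemma rho1_eq_on_12 {t : ℝ} (h0 : 1 ≤ t) (h1 : t ≤ 2) : rho1 t = 2 - t := by
  unfold rho1
  rcases eq_or_lt_of_le h1 with h | h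
  · subst h; norm_num [Int.fract]
  · have ha : Int.fract (t / 2) = t / 2 := Int.fract_eq_self.mpr ⟨by linarith, by linarith⟩
    have hb : Int.fract (-t / 2) = 1 - t / 2 := by
      have : -t / 2 = (1 - t / 2) + (-1 : ℤ) := by push_cast; ring
      rw [this, Int.fract_add_intCast, Int.fract_eq_self.mpr ⟨by linarith, by linarith⟩]
    rw [ha, hb]
    rw [min_eq_right (by linarith)]
    ring

lemma II {f : ℝ → ℝ} {C : ℝ} (hf : Measurable f) (hC : ∀ x, |f x| ≤ C) (a b : ℝ) :
    IntervalIntegrable f volume a b := by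
  rw [intervalIntegrable_iff]
  apply MeasureTheory.Integrable.mono' (g := fun _ => C)
  · exact integrableOn_const measure_Ioc_lt_top.ne
  · exact hf.aestronglyMeasurable
  · exact ae_of_all _ fun x => by simpa [Real.norm_eq_abs] using hC x

lemma integral_abs_cwPsi_le {a b : ℝ} (hab : a ≤ b) :
    ∫ t in a..b, |cwPsi t| ≤ 3 := by
  have hb : ∀ t : ℝ, (if 0 ≤ t ∧ t ≤ 3 then (1:ℝ) else 0) =
      Set.indicator (Set.Icc 0 3) (fun _ => (1:ℝ)) t := by
    intro t; simp [Set.indicator_apply, Set.mem_Icc]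
  have h1 : ∫ t in a..b, |cwPsi t| ≤ ∫ t in a..b, (if 0 ≤ t ∧ t ≤ 3 then (1:ℝ) else 0) := by
    apply intervalIntegral.integral_mono_on hab
    · exact II (cwPsi_meas.abs) (fun x => by rw [abs_abs]; exact cwPsi_abs_le_one x) a b
    · apply II (C := 1) _ _ a b
      · simp only [funext hb]
        exact (measurable_const.indicator measurableSet_Icc)
      · intro x; rw [abs_le]; constructor <;> [split_ifs <;> norm_num; split_ifs <;> norm_num]
    · exact fun x _ => cwPsi_abs_le_bnd x
  have h2 : ∫ t in a..b, (if 0 ≤ t ∧ t ≤ 3 then (1:ℝ) else 0) ≤ 3 := by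
    rw [funext hb, intervalIntegral.integral_of_le hab,
      MeasureTheory.setIntegral_indicator measurableSet_Icc, MeasureTheory.setIntegral_const,
      smul_eq_mul, mul_one]
    have hm : volume (Set.Ioc a b ∩ Set.Icc 0 3) ≤ volume (Set.Icc (0:ℝ) 3) :=
      measure_mono Set.inter_subset_right
    have h3 : volume (Set.Icc (0:ℝ) 3) = ENNReal.ofReal 3 := by
      rw [Real.volume_Icc]; norm_num
    calc (volume (Set.Ioc a b ∩ Set.Icc 0 3)).toReal
        ≤ (volume (Set.Icc (0:ℝ) 3)).toReal := by
          apply ENNReal.toReal_mono _ hm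
          rw [h3]; exact ENNReal.ofReal_ne_top
      _ = 3 := by rw [h3, ENNReal.toReal_ofReal]; norm_num
  linarith

lemma G_meas : Measurable fun u => |cwPsi u| := cwPsi_meas.abs
lemma G_bd (u : ℝ) : |(fun u => |cwPsi u|) u| ≤ 1 := by
  simp only [abs_abs]; exact cwPsi_abs_le_one u

lemma F_meas (m k : ℤ) : Measurable fun t => |cwPsi ((2:ℝ)^m * rho1 t - k)| :=
  (cwPsi_meas.comp ((measurable_const.mul rho1_meas).sub measurable_const)).abs
lemma F_bd (m k : ℤ) (t : ℝ) : |(fun t => |cwPsi ((2:ℝ)^m * rho1 t - k)|) t| ≤ 1 := by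
  simp only [abs_abs]; exact cwPsi_abs_le_one _

lemma key (m : ℤ) (k : ℤ) :
    ∫ t in (0:ℝ)..2, |cwPsi ((2:ℝ)^m * rho1 t - k)| ≤ 6 * (2:ℝ)^(-m) := by
  have h2m : (0:ℝ) < (2:ℝ)^m := zpow_pos (by norm_num) m
  have hint := II (F_meas m k) (F_bd m k)
  rw [← intervalIntegral.integral_add_adjacent_intervals (a := (0:ℝ)) (b := 1) (c := 2)
    (hint 0 1) (hint 1 2)]
  have e1 : ∫ t in (0:ℝ)..1, |cwPsi ((2:ℝ)^m * rho1 t - k)| ≤ 3 * (2:ℝ)^(-m) := by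
    have hc : ∫ t in (0:ℝ)..1, |cwPsi ((2:ℝ)^m * rho1 t - k)|
        = ∫ t in (0:ℝ)..1, (fun u => |cwPsi u|) ((2:ℝ)^m * t + (-(k:ℝ))) := by
      apply intervalIntegral.integral_congr
      intro t ht
      rw [Set.uIcc_of_le (by norm_num : (0:ℝ) ≤ 1)] at ht
      simp only [rho1_eq_on_01 ht.1 ht.2, sub_eq_add_neg]
    rw [hc, intervalIntegral.integral_comp_mul_add (fun u => |cwPsi u|) h2m.ne' (-(k:ℝ)),
      smul_eq_mul]
    have hS := integral_abs_cwPsi_le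
      (a := (2:ℝ)^m * 0 + -(k:ℝ)) (b := (2:ℝ)^m * 1 + -(k:ℝ)) (by nlinarith)
    have hpos : (0:ℝ) < ((2:ℝ)^m)⁻¹ := by positivity
    calc ((2:ℝ)^m)⁻¹ * ∫ u in ((2:ℝ)^m * 0 + -(k:ℝ))..((2:ℝ)^m * 1 + -(k:ℝ)), |cwPsi u|
        ≤ ((2:ℝ)^m)⁻¹ * 3 := by nlinarith
      _ = 3 * (2:ℝ)^(-m) := by rw [zpow_neg]; ring
  have e2 : ∫ t in (1:ℝ)..2, |cwPsi ((2:ℝ)^m * rho1 t - k)| ≤ 3 * (2:ℝ)^(-m) := by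
    have hc : ∫ t in (1:ℝ)..2, |cwPsi ((2:ℝ)^m * rho1 t - k)|
        = ∫ t in (1:ℝ)..2, (fun u => |cwPsi u|) ((-(2:ℝ)^m) * t + (2 * (2:ℝ)^m + -(k:ℝ))) := by
      apply intervalIntegral.integral_congr
      intro t ht
      rw [Set.uIcc_of_le (by norm_num : (1:ℝ) ≤ 2)] at ht
      dsimp only
      rw [rho1_eq_on_12 ht.1 ht.2]
      ring_nf
    rw [hc, intervalIntegral.integral_comp_mul_add (fun u => |cwPsi u|)
      (neg_ne_zero.mpr h2m.ne') (2 * (2:ℝ)^m + -(k:ℝ)), intervalIntegral.integral_symm,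
      smul_eq_mul]
    have hS := integral_abs_cwPsi_le
      (a := (-(2:ℝ)^m) * 2 + (2 * (2:ℝ)^m + -(k:ℝ)))
      (b := (-(2:ℝ)^m) * 1 + (2 * (2:ℝ)^m + -(k:ℝ))) (by nlinarith)
    have hpos : (0:ℝ) < ((2:ℝ)^m)⁻¹ := by positivity
    have hinv : (-(2:ℝ)^m)⁻¹ = -((2:ℝ)^m)⁻¹ := by
      rw [inv_neg]
    rw [hinv]
    calc -((2:ℝ)^m)⁻¹ *
          -(∫ u in ((-(2:ℝ)^m) * 2 + (2 * (2:ℝ)^m + -(k:ℝ)))..((-(2:ℝ)^m) * 1 +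
            (2 * (2:ℝ)^m + -(k:ℝ))), |cwPsi u|)
        = ((2:ℝ)^m)⁻¹ * ∫ u in ((-(2:ℝ)^m) * 2 + (2 * (2:ℝ)^m + -(k:ℝ)))..((-(2:ℝ)^m) * 1 +
            (2 * (2:ℝ)^m + -(k:ℝ))), |cwPsi u| := by ring
      _ ≤ ((2:ℝ)^m)⁻¹ * 3 := by nlinarith
      _ = 3 * (2:ℝ)^(-m) := by rw [zpow_neg]; ring
  linarith

lemma keyJ (m : ℤ) (k : ℤ) (x b : ℝ) (hb : 0 < b) (hb1 : b ≤ 1) :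
    ∫ h in (-1:ℝ)..1, |cwPsi ((2:ℝ)^m * rho1 (b * h + x) - k)| ≤ b⁻¹ * (6 * (2:ℝ)^(-m)) := by
  have hper : Function.Periodic (fun t => |cwPsi ((2:ℝ)^m * rho1 t - k)|) 2 := by
    intro t; simp only [rho1_periodic t]
  have hint := II (F_meas m k) (F_bd m k)
  have hrw : ∫ h in (-1:ℝ)..1, |cwPsi ((2:ℝ)^m * rho1 (b * h + x) - k)|
      = b⁻¹ • ∫ u in (b * -1 + x)..(b * 1 + x), |cwPsi ((2:ℝ)^m * rho1 u - k)| :=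
    intervalIntegral.integral_comp_mul_add (fun t => |cwPsi ((2:ℝ)^m * rho1 t - k)|) hb.ne' x
  rw [hrw, smul_eq_mul]
  have h1 : ∫ u in (b * -1 + x)..(b * 1 + x), |cwPsi ((2:ℝ)^m * rho1 u - k)|
      ≤ ∫ u in (b * -1 + x)..(b * -1 + x + 2), |cwPsi ((2:ℝ)^m * rho1 u - k)| :=
    intervalIntegral.integral_mono_interval le_rfl (by linarith) (by linarith)
      (ae_of_all _ fun u => abs_nonneg _) (hint _ _)
  have h2 : ∫ u in (b * -1 + x)..(b * -1 + x + 2), |cwPsi ((2:ℝ)^m * rho1 u - k)|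
      = ∫ u in (0:ℝ)..(0 + 2), |cwPsi ((2:ℝ)^m * rho1 u - k)| :=
    hper.intervalIntegral_add_eq _ 0
  have h3 : ∫ u in (0:ℝ)..(0 + 2), |cwPsi ((2:ℝ)^m * rho1 u - k)| ≤ 6 * (2:ℝ)^(-m) := by
    rw [zero_add]; exact key m k
  have hbinv : (0:ℝ) < b⁻¹ := by positivity
  nlinarith

/-- Outside the support of `ψ_{j+l,k} ∘ ρ₁` (with `l ≥ 0`), the second-order mean of
differences at scale `2^{-j}` is bounded by a constant times `2^{-l}`. -/
theorem statement15 :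
    ∃ C : ℝ, 0 < C ∧
      ∀ j : ℤ, 1 ≤ j → ∀ l : ℤ, 0 ≤ l → ∀ k : ℤ, ∀ x : ℝ,
        x ∉ tsupport (fun t => cw (j + l) k (rho1 t)) →
        (∫ h in (-1 : ℝ)..1,
            |diff2 (h * (2 : ℝ) ^ (-j)) (fun t => cw (j + l) k (rho1 t)) x|) ≤
          C * (2 : ℝ) ^ (-l) := by
  refine ⟨15, by norm_num, fun j hj l hl k x hx => ?_⟩
  set m : ℤ := j + l with hm
  have hjl : (0:ℤ) ≤ m := by omega
  have hg : (fun t => cw m k (rho1 t)) = fun t => cwPsi ((2:ℝ)^m * rho1 t - k) := by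
    funext t; simp [cw, hjl]
  rw [hg] at hx ⊢
  have hgx := image_eq_zero_of_notMem_tsupport
    (f := fun t => cwPsi ((2:ℝ)^m * rho1 t - (k:ℝ))) (x := x) hx
  set a : ℝ := (2:ℝ)^(-j) with ha
  have hapos : (0:ℝ) < a := zpow_pos (by norm_num) _
  have ha1 : a ≤ 1/2 := by
    rw [ha]
    calc (2:ℝ)^(-j) ≤ (2:ℝ)^(-1:ℤ) := by
          apply zpow_le_zpow_right₀ (by norm_num) (by omega)
      _ = 1/2 := by norm_num
  have inner1 : Measurable fun h : ℝ => (2:ℝ)^m * rho1 (x + 2 * (h * a)) - (k:ℝ) :=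
    (measurable_const.mul (rho1_meas.comp (by fun_prop))).sub measurable_const
  have inner2 : Measurable fun h : ℝ => (2:ℝ)^m * rho1 (x + h * a) - (k:ℝ) :=
    (measurable_const.mul (rho1_meas.comp (by fun_prop))).sub measurable_const
  have meas1 : Measurable fun h : ℝ => |cwPsi ((2:ℝ)^m * rho1 (x + 2 * (h * a)) - k)| :=
    (cwPsi_meas.comp inner1).abs
  have meas2 : Measurable fun h : ℝ => |cwPsi ((2:ℝ)^m * rho1 (x + h * a) - k)| :=
    (cwPsi_meas.comp inner2).abs
  have bd1 : ∀ h : ℝ, |(fun h : ℝ => |cwPsi ((2:ℝ)^m * rho1 (x + 2 * (h * a)) - k)|) h| ≤ 1 := by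
    intro h; rw [abs_abs]; exact cwPsi_abs_le_one _
  have bd2 : ∀ h : ℝ, |(fun h : ℝ => |cwPsi ((2:ℝ)^m * rho1 (x + h * a) - k)|) h| ≤ 1 := by
    intro h; rw [abs_abs]; exact cwPsi_abs_le_one _
  have int1 := II meas1 bd1 (-1 : ℝ) 1
  have int2 := II meas2 bd2 (-1 : ℝ) 1
  have intL : IntervalIntegrable
      (fun h => |diff2 (h * a) (fun t => cwPsi ((2:ℝ)^m * rho1 t - k)) x|)
      volume (-1 : ℝ) 1 := by
    apply II (C := 4)
    · simp only [diff2]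
      exact (((cwPsi_meas.comp inner1).sub
        ((cwPsi_meas.comp inner2).const_mul 2)).add measurable_const).abs
    · intro h
      simp only [diff2]
      rw [abs_abs, abs_le]
      have h1 := abs_le.mp (cwPsi_abs_le_one ((2:ℝ)^m * rho1 (x + 2 * (h * a)) - k))
      have h2 := abs_le.mp (cwPsi_abs_le_one ((2:ℝ)^m * rho1 (x + h * a) - k))
      have h3 := abs_le.mp (cwPsi_abs_le_one ((2:ℝ)^m * rho1 x - k))
      exact ⟨by linarith [h1.1, h2.2, h3.1], by linarith [h1.2, h2.1, h3.2]⟩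
  have step1 : (∫ h in (-1:ℝ)..1,
        |diff2 (h * a) (fun t => cwPsi ((2:ℝ)^m * rho1 t - k)) x|)
      ≤ ∫ h in (-1:ℝ)..1,
        (|cwPsi ((2:ℝ)^m * rho1 (x + 2 * (h * a)) - k)| +
          2 * |cwPsi ((2:ℝ)^m * rho1 (x + h * a) - k)|) := by
    apply intervalIntegral.integral_mono_on (by norm_num) intL (int1.add (int2.const_mul 2))
    intro h _
    simp only [diff2, hgx, add_zero]
    have h1 := abs_le.mp (cwPsi_abs_le_one ((2:ℝ)^m * rho1 (x + 2 * (h * a)) - k))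
    have h2 := abs_le.mp (cwPsi_abs_le_one ((2:ℝ)^m * rho1 (x + h * a) - k))
    rw [abs_le]
    constructor <;>
      · rcases abs_cases (cwPsi ((2:ℝ)^m * rho1 (x + 2 * (h * a)) - k)) with ⟨e1, _⟩ | ⟨e1, _⟩ <;>
        rcases abs_cases (cwPsi ((2:ℝ)^m * rho1 (x + h * a) - k)) with ⟨e2, _⟩ | ⟨e2, _⟩ <;>
        linarith
  have step2 : (∫ h in (-1:ℝ)..1,
        (|cwPsi ((2:ℝ)^m * rho1 (x + 2 * (h * a)) - k)| +
          2 * |cwPsi ((2:ℝ)^m * rho1 (x + h * a) - k)|))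
      = (∫ h in (-1:ℝ)..1, |cwPsi ((2:ℝ)^m * rho1 (x + 2 * (h * a)) - k)|) +
        2 * ∫ h in (-1:ℝ)..1, |cwPsi ((2:ℝ)^m * rho1 (x + h * a) - k)| := by
    rw [intervalIntegral.integral_add int1 (int2.const_mul 2),
      intervalIntegral.integral_const_mul]
  have e1 : (∫ h in (-1:ℝ)..1, |cwPsi ((2:ℝ)^m * rho1 (x + 2 * (h * a)) - k)|)
      = ∫ h in (-1:ℝ)..1, |cwPsi ((2:ℝ)^m * rho1 ((2 * a) * h + x) - k)| := by
    apply intervalIntegral.integral_congr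
    intro h _
    dsimp only
    ring_nf
  have e2 : (∫ h in (-1:ℝ)..1, |cwPsi ((2:ℝ)^m * rho1 (x + h * a) - k)|)
      = ∫ h in (-1:ℝ)..1, |cwPsi ((2:ℝ)^m * rho1 (a * h + x) - k)| := by
    apply intervalIntegral.integral_congr
    intro h _
    dsimp only
    ring_nf
  have j1 := keyJ m k x (2 * a) (by linarith) (by linarith)
  have j2 := keyJ m k x a hapos (by linarith)
  have hzm : (2:ℝ)^(-m) = a * (2:ℝ)^(-l) := by
    rw [ha, ← zpow_add₀ (by norm_num : (2:ℝ) ≠ 0)]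
    congr 1
    omega
  rw [hzm] at j1 j2
  have hL : (0:ℝ) < (2:ℝ)^(-l:ℤ) := zpow_pos (by norm_num) _
  have hane : a ≠ 0 := hapos.ne'
  have v1 : (2 * a)⁻¹ * (6 * (a * (2:ℝ)^(-l))) = 3 * (2:ℝ)^(-l) := by
    field_simp
    ring
  have v2 : a⁻¹ * (6 * (a * (2:ℝ)^(-l))) = 6 * (2:ℝ)^(-l) := by
    field_simp
  rw [v1] at j1
  rw [v2] at j2
  calc (∫ h in (-1:ℝ)..1,
        |diff2 (h * a) (fun t => cwPsi ((2:ℝ)^m * rho1 t - k)) x|)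
      ≤ _ := step1
    _ = _ := step2
    _ ≤ 3 * (2:ℝ)^(-l) + 2 * (6 * (2:ℝ)^(-l)) := by
        rw [e1, e2]
        linarith
    _ = 15 * (2:ℝ)^(-l) := by ring
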